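/- Let (A, B, ψ, J, K) be a cylindrical bialgebra and let g ∈ A be invertible. Set ψ_g = Ad(g)∘ψ, J_g = (g⊗g)·J·Δ(g)^{-1}, and K_g = g·K. Then (A, B, ψ_g, J_g, K_g) is again a cylindrical bialgebra; in particular (ψ_g, J_g) is a twist pair, K_g·b = ψ_g(b)·K_g for all b ∈ B, and Δ(K_g) = J_g^{-1}·(1⊗K_g)·R^{ψ_g}·(K_g⊗1). -/

import Mathlib

open TensorProduct

section Defs
variable (k A : Type*) [CommSemiring k] [Semiring A]

section Alg
variable [Algebra k A]

noncomputable def emb12 : A ⊗[k] A →ₐ[k] A ⊗[k] (A ⊗[k] A) :=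
  Algebra.TensorProduct.map (AlgHom.id k A) Algebra.TensorProduct.includeLeft

noncomputable def emb13 : A ⊗[k] A →ₐ[k] A ⊗[k] (A ⊗[k] A) :=
  Algebra.TensorProduct.map (AlgHom.id k A) Algebra.TensorProduct.includeRight

noncomputable def emb23 : A ⊗[k] A →ₐ[k] A ⊗[k] (A ⊗[k] A) :=
  Algebra.TensorProduct.includeRight

noncomputable def flip2 : A ⊗[k] A ≃ₐ[k] A ⊗[k] A := Algebra.TensorProduct.comm k A A

noncomputable def psiL (ψ : A ≃ₐ[k] A) : A ⊗[k] A →ₐ[k] A ⊗[k] A :=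
  Algebra.TensorProduct.map ψ.toAlgHom (AlgHom.id k A)

noncomputable def psiR (ψ : A ≃ₐ[k] A) : A ⊗[k] A →ₐ[k] A ⊗[k] A :=
  Algebra.TensorProduct.map (AlgHom.id k A) ψ.toAlgHom

noncomputable def psiBoth (ψ : A ≃ₐ[k] A) : A ⊗[k] A →ₐ[k] A ⊗[k] A :=
  Algebra.TensorProduct.map ψ.toAlgHom ψ.toAlgHom

noncomputable def sub2 (B : Subalgebra k A) : Submodule k (A ⊗[k] A) :=
  Submodule.span k {t : A ⊗[k] A | ∃ x ∈ B, ∃ y : A, t = x ⊗ₜ[k] y}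

end Alg

variable [Bialgebra k A]

noncomputable def cop : A →ₐ[k] A ⊗[k] A := Bialgebra.comulAlgHom k A

noncomputable def copOp : A →ₐ[k] A ⊗[k] A := (flip2 k A).toAlgHom.comp (cop k A)

noncomputable def cou : A →ₐ[k] k := Bialgebra.counitAlgHom k A

noncomputable def copL : A ⊗[k] A →ₐ[k] A ⊗[k] (A ⊗[k] A) :=
  (Algebra.TensorProduct.assoc k k k A A A).toAlgHom.comp
    (Algebra.TensorProduct.map (cop k A) (AlgHom.id k A))

noncomputable def copR : A ⊗[k] A →ₐ[k] A ⊗[k] (A ⊗[k] A) :=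
  Algebra.TensorProduct.map (AlgHom.id k A) (cop k A)

noncomputable def couL : A ⊗[k] A →ₐ[k] A :=
  (Algebra.TensorProduct.lid k A).toAlgHom.comp
    (Algebra.TensorProduct.map (cou k A) (AlgHom.id k A))

noncomputable def couR : A ⊗[k] A →ₐ[k] A :=
  (Algebra.TensorProduct.rid k k A).toAlgHom.comp
    (Algebra.TensorProduct.map (AlgHom.id k A) (cou k A))

structure QTriangular (R : A ⊗[k] A) : Prop where
  isUnit : IsUnit R
  intertwine : ∀ x : A, R * cop k A x = copOp k A x * R
  coproduct_left : copL k A R = emb13 k A R * emb23 k A R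
  coproduct_right : copR k A R = emb13 k A R * emb12 k A R

end Defs

section QSP
variable (k A : Type*) [CommSemiring k] [Semiring A] [Bialgebra k A]

/-- A twist pair `(ψ, J)`: `J` is a Drinfeld twist and `A^{cop,ψ} = A_J` as
quasitriangular bialgebras. -/
structure TwistPair (R : A ⊗[k] A) (ψ : A ≃ₐ[k] A) (J Jinv : A ⊗[k] A) : Prop where
  mul_inv : J * Jinv = 1
  inv_mul : Jinv * J = 1
  cocycle : emb12 k A J * copL k A J = emb23 k A J * copR k A J
  counit_left : couL k A J = 1
  counit_right : couR k A J = 1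
  compat_coproduct : ∀ x : A, psiBoth k A ψ (copOp k A (ψ.symm x)) = J * cop k A x * Jinv
  compat_R : psiBoth k A ψ (flip2 k A R) = flip2 k A J * R * Jinv

/-- A cylindrical bialgebra `(A, B, ψ, J, K)`. -/
structure Cylindrical (R : A ⊗[k] A) (B : Subalgebra k A) (ψ : A ≃ₐ[k] A)
    (J Jinv : A ⊗[k] A) (K : A) : Prop where
  qt : QTriangular k A R
  coideal : ∀ b ∈ B, cop k A b ∈ sub2 k A B
  twist : TwistPair k A R ψ J Jinv
  isUnitK : IsUnit K
  intertwine : ∀ b ∈ B, K * b = ψ b * K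
  coproduct : cop k A K = Jinv * ((1 : A) ⊗ₜ[k] K) * psiL k A ψ R * (K ⊗ₜ[k] (1 : A))

/-- A reflection bialgebra `(A, B, ψ, J, 𝕂)`, the universal tensor K-matrix `𝕂` being
an element of `B ⊗ A ⊆ A ⊗ A`. -/
structure Reflection (R : A ⊗[k] A) (B : Subalgebra k A) (ψ : A ≃ₐ[k] A)
    (J Jinv : A ⊗[k] A) (TK : A ⊗[k] A) : Prop where
  qt : QTriangular k A R
  coideal : ∀ b ∈ B, cop k A b ∈ sub2 k A B
  twist : TwistPair k A R ψ J Jinv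
  support : TK ∈ sub2 k A B
  isUnitTK : IsUnit TK
  intertwine : ∀ b ∈ B, TK * cop k A b = psiR k A ψ (cop k A b) * TK
  coproduct_left : copL k A TK =
    emb23 k A (flip2 k A (psiL k A ψ R)) * emb13 k A TK * emb23 k A R
  coproduct_right : copR k A TK =
    emb23 k A Jinv * emb13 k A TK * emb23 k A (psiL k A ψ R) * emb12 k A TK

end QSP

section Gauge
variable (k A : Type*) [CommSemiring k] [Semiring A] [Bialgebra k A]

/-- the gauged twist automorphism `ψ_g = Ad(g) ∘ ψ` -/
noncomputable def gaugePsi (ψ : A ≃ₐ[k] A) (g gInv : A) : A → A :=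
  fun x => g * ψ x * gInv

/-- the inverse `ψ_g⁻¹ = ψ⁻¹ ∘ Ad(g)⁻¹` of the gauged twist automorphism -/
noncomputable def gaugePsiInv (ψ : A ≃ₐ[k] A) (g gInv : A) : A → A :=
  fun x => ψ.symm (gInv * x * g)

/-- `ψ_g ⊗ ψ_g = Ad(g ⊗ g) ∘ (ψ ⊗ ψ)` on `A ⊗ A` -/
noncomputable def gaugePsi2 (ψ : A ≃ₐ[k] A) (g gInv : A) : A ⊗[k] A → A ⊗[k] A :=
  fun u => (g ⊗ₜ[k] g) * psiBoth k A ψ u * (gInv ⊗ₜ[k] gInv)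

/-- the gauged Drinfeld twist `J_g = (g ⊗ g) · J · Δ(g)⁻¹` -/
noncomputable def gaugeJ (J : A ⊗[k] A) (g gInv : A) : A ⊗[k] A :=
  (g ⊗ₜ[k] g) * J * cop k A gInv

/-- the inverse `J_g⁻¹ = Δ(g) · J⁻¹ · (g⁻¹ ⊗ g⁻¹)` of the gauged Drinfeld twist -/
noncomputable def gaugeJinv (Jinv : A ⊗[k] A) (g gInv : A) : A ⊗[k] A :=
  cop k A g * Jinv * (gInv ⊗ₜ[k] gInv)

/-- `R^{ψ_g} = (ψ_g ⊗ id)(R) = (g ⊗ 1) · R^ψ · (g⁻¹ ⊗ 1)` -/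
noncomputable def gaugeRpsi (R : A ⊗[k] A) (ψ : A ≃ₐ[k] A) (g gInv : A) : A ⊗[k] A :=
  (g ⊗ₜ[k] (1 : A)) * psiL k A ψ R * (gInv ⊗ₜ[k] (1 : A))

end Gauge

section Helpers

lemma assoc_pair {M : Type*} [Semigroup M] {a b c : M} (h : a * b = c) (x : M) :
    a * (b * x) = c * x := by rw [← mul_assoc, h]

lemma swap_pair {M : Type*} [Semigroup M] {a b : M} (h : a * b = b * a) (x : M) :
    a * (b * x) = b * (a * x) := by rw [← mul_assoc, h, mul_assoc]

lemma mid3 {M : Type*} [Semigroup M] {a b c d : M} (h : a * (b * c) = d) (x : M) :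
    a * (b * (c * x)) = d * x := by rw [← mul_assoc b c x, ← mul_assoc, ← mul_assoc, mul_assoc a b c, h]

variable {k A : Type*} [CommSemiring k] [Semiring A] [Bialgebra k A]

lemma emb23_apply (u : A ⊗[k] A) : emb23 k A u = (1 : A) ⊗ₜ[k] u := rfl

lemma emb12_tmul (x y : A) : emb12 k A (x ⊗ₜ[k] y) = x ⊗ₜ[k] (y ⊗ₜ[k] (1 : A)) := by
  simp [emb12]

lemma assoc_emb (u : A ⊗[k] A) (y : A) :
    (Algebra.TensorProduct.assoc k k k A A A) (u ⊗ₜ[k] y) =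
      emb12 k A u * ((1 : A) ⊗ₜ[k] ((1 : A) ⊗ₜ[k] y)) := by
  induction u using TensorProduct.induction_on with
  | zero => simp
  | tmul a b =>
      simp [emb12_tmul, Algebra.TensorProduct.assoc_tmul,
        Algebra.TensorProduct.tmul_mul_tmul]
  | add u v hu hv =>
      rw [add_tmul, map_add, hu, hv, map_add, add_mul]

lemma copL_tmul (x y : A) :
    copL k A (x ⊗ₜ[k] y) = emb12 k A (cop k A x) * ((1 : A) ⊗ₜ[k] ((1 : A) ⊗ₜ[k] y)) := by
  rw [copL]
  simp only [AlgHom.coe_comp, AlgEquiv.toAlgHom_eq_coe, AlgHom.coe_coe, Function.comp_apply,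
    Algebra.TensorProduct.map_tmul, AlgHom.coe_id, id_eq]
  exact assoc_emb _ _

lemma copR_tmul (x y : A) :
    copR k A (x ⊗ₜ[k] y) = x ⊗ₜ[k] (cop k A y) := by
  simp [copR]

lemma comm_emb12 (u : A ⊗[k] A) (c : A) :
    emb12 k A u * ((1 : A) ⊗ₜ[k] ((1 : A) ⊗ₜ[k] c)) =
      ((1 : A) ⊗ₜ[k] ((1 : A) ⊗ₜ[k] c)) * emb12 k A u := by
  induction u using TensorProduct.induction_on with
  | zero => simp
  | tmul a b =>
      simp [emb12_tmul, Algebra.TensorProduct.tmul_mul_tmul]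
  | add u v hu hv => rw [map_add, add_mul, mul_add, hu, hv]

lemma map_cop_rTensor (u : A ⊗[k] A) :
    Algebra.TensorProduct.map (cop k A) (AlgHom.id k A) u =
      LinearMap.rTensor A (Coalgebra.comul (R := k)) u := by
  induction u using TensorProduct.induction_on with
  | zero => simp
  | tmul a b => simp [cop]
  | add u v hu hv => rw [map_add, map_add, hu, hv]

lemma map_cop_lTensor (u : A ⊗[k] A) :
    Algebra.TensorProduct.map (AlgHom.id k A) (cop k A) u =
      LinearMap.lTensor A (Coalgebra.comul (R := k)) u := by
  induction u using TensorProduct.induction_on with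
  | zero => simp
  | tmul a b => simp [cop]
  | add u v hu hv => rw [map_add, map_add, hu, hv]

lemma alg_assoc_eq (u : (A ⊗[k] A) ⊗[k] A) :
    (Algebra.TensorProduct.assoc k k k A A A) u = (TensorProduct.assoc k A A A) u := rfl

lemma coassoc_cop (x : A) : copL k A (cop k A x) = copR k A (cop k A x) := by
  rw [copL, copR]
  simp only [AlgHom.coe_comp, AlgEquiv.toAlgHom_eq_coe, AlgHom.coe_coe, Function.comp_apply]
  rw [map_cop_rTensor, map_cop_lTensor]
  erw [alg_assoc_eq]
  have : cop k A x = Coalgebra.comul (R := k) x := rfl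
  rw [this]
  exact Coalgebra.coassoc_apply x

lemma copOp_eq (x : A) : copOp k A x = flip2 k A (cop k A x) := rfl

end Helpers

/-- Gauge transformation of a cylindrical bialgebra: if
`(A, B, ψ, J, K)` is a cylindrical bialgebra and `g ∈ A` is invertible, then
`(A, B, ψ_g, J_g, K_g)` with `ψ_g = Ad(g)∘ψ`, `J_g = (g⊗g)·J·Δ(g)⁻¹`, `K_g = g·K`
is again a cylindrical bialgebra: `(ψ_g, J_g)` is a twist pair,
`K_g·b = ψ_g(b)·K_g` for `b ∈ B`, and `Δ(K_g) = J_g⁻¹·(1⊗K_g)·R^{ψ_g}·(K_g⊗1)`. -/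
theorem cylindrical_gauge_transformation
    {k A : Type*} [Field k] [Ring A] [Bialgebra k A]
    (R : A ⊗[k] A) (B : Subalgebra k A) (ψ : A ≃ₐ[k] A) (J Jinv : A ⊗[k] A) (K : A)
    (hcyl : Cylindrical k A R B ψ J Jinv K)
    (g gInv : A) (hg : g * gInv = 1) (hg' : gInv * g = 1) :
    -- (ψ_g, J_g) is a twist pair: J_g is invertible, satisfies the cocycle identity, and
    -- A^{cop,ψ_g} = A_{J_g} as quasitriangular bialgebras
    (gaugeJ k A J g gInv * gaugeJinv k A Jinv g gInv = 1) ∧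
    (gaugeJinv k A Jinv g gInv * gaugeJ k A J g gInv = 1) ∧
    (emb12 k A (gaugeJ k A J g gInv) * copL k A (gaugeJ k A J g gInv) =
      emb23 k A (gaugeJ k A J g gInv) * copR k A (gaugeJ k A J g gInv)) ∧
    (∀ x : A, gaugePsi2 k A ψ g gInv (copOp k A (gaugePsiInv k A ψ g gInv x)) =
      gaugeJ k A J g gInv * cop k A x * gaugeJinv k A Jinv g gInv) ∧
    (gaugePsi2 k A ψ g gInv (flip2 k A R) =
      flip2 k A (gaugeJ k A J g gInv) * R * gaugeJinv k A Jinv g gInv) ∧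
    -- K_g = g·K is an invertible basic K-matrix for (ψ_g, J_g)
    (IsUnit (g * K)) ∧
    (∀ b ∈ B, (g * K) * b = gaugePsi k A ψ g gInv b * (g * K)) ∧
    (cop k A (g * K) =
      gaugeJinv k A Jinv g gInv * ((1 : A) ⊗ₜ[k] (g * K)) *
        gaugeRpsi k A R ψ g gInv * ((g * K) ⊗ₜ[k] (1 : A))) := by
  have hD : cop k A g * cop k A gInv = 1 := by rw [← map_mul, hg, map_one]
  have hD' : cop k A gInv * cop k A g = 1 := by rw [← map_mul, hg', map_one]
  have hG : (g ⊗ₜ[k] g : A ⊗[k] A) * (gInv ⊗ₜ[k] gInv) = 1 := by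
    rw [Algebra.TensorProduct.tmul_mul_tmul, hg, Algebra.TensorProduct.one_def]
  have hG' : (gInv ⊗ₜ[k] gInv : A ⊗[k] A) * (g ⊗ₜ[k] g) = 1 := by
    rw [Algebra.TensorProduct.tmul_mul_tmul, hg', Algebra.TensorProduct.one_def]
  refine ⟨?_, ?_, ?_, ?_, ?_, ?_, ?_, ?_⟩
  · -- J_g * J_g⁻¹ = 1
    rw [gaugeJ, gaugeJinv]
    simp only [mul_assoc]
    rw [assoc_pair hD', one_mul, assoc_pair hcyl.twist.mul_inv, one_mul, hG]
  · -- J_g⁻¹ * J_g = 1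
    rw [gaugeJ, gaugeJinv]
    simp only [mul_assoc]
    rw [assoc_pair hG', one_mul, assoc_pair hcyl.twist.inv_mul, one_mul, hD]
  · -- cocycle
    rw [gaugeJ]
    simp only [map_mul, mul_assoc]
    have h1 : emb12 k A (cop k A gInv) * copL k A (g ⊗ₜ[k] g) =
        (1 : A) ⊗ₜ[k] ((1 : A) ⊗ₜ[k] g) := by
      rw [copL_tmul, ← mul_assoc, ← map_mul, hD', map_one, one_mul]
    have h3 : emb12 k A (g ⊗ₜ[k] g) * ((1 : A) ⊗ₜ[k] ((1 : A) ⊗ₜ[k] g)) =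
        g ⊗ₜ[k] (g ⊗ₜ[k] g) := by
      simp [emb12_tmul, Algebra.TensorProduct.tmul_mul_tmul]
    have h4 : emb12 k A J * copL k A J = emb23 k A J * copR k A J :=
      hcyl.twist.cocycle
    have h5 : copL k A (cop k A gInv) = copR k A (cop k A gInv) := coassoc_cop gInv
    rw [assoc_pair h1, swap_pair (comm_emb12 J g), assoc_pair h3, h5,
      assoc_pair h4]
    -- RHS side
    have h1' : emb23 k A (cop k A gInv) * copR k A (g ⊗ₜ[k] g) =
        g ⊗ₜ[k] (1 : A ⊗[k] A) := by
      rw [copR_tmul, emb23_apply, Algebra.TensorProduct.tmul_mul_tmul, one_mul, hD',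
        Algebra.TensorProduct.one_def]
    have h2' : emb23 k A J * (g ⊗ₜ[k] (1 : A ⊗[k] A)) =
        (g ⊗ₜ[k] (1 : A ⊗[k] A)) * emb23 k A J := by
      simp [emb23_apply, Algebra.TensorProduct.tmul_mul_tmul]
    have h3' : emb23 k A (g ⊗ₜ[k] g) * (g ⊗ₜ[k] (1 : A ⊗[k] A)) =
        g ⊗ₜ[k] (g ⊗ₜ[k] g) := by
      simp [emb23_apply, Algebra.TensorProduct.tmul_mul_tmul]
    rw [assoc_pair h1', swap_pair h2', assoc_pair h3', mul_assoc]
  · -- compat_coproduct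
    intro x
    rw [gaugePsi2, gaugePsiInv, gaugeJ, gaugeJinv,
      hcyl.twist.compat_coproduct (gInv * x * g), map_mul, map_mul]
    simp only [mul_assoc]
  · -- compat_R
    rw [gaugePsi2, gaugeJ, gaugeJinv, hcyl.twist.compat_R, map_mul, map_mul]
    have hflipG : flip2 k A ((g : A) ⊗ₜ[k] g) = g ⊗ₜ[k] g := by
      simp [flip2]
    have key : flip2 k A (cop k A gInv) * (R * cop k A g) = R := by
      rw [hcyl.qt.intertwine g, copOp_eq, ← mul_assoc, ← map_mul, hD', map_one, one_mul]
    rw [hflipG]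
    simp only [mul_assoc]
    rw [mid3 key]
  · -- IsUnit (g * K)
    exact IsUnit.mul ⟨⟨g, gInv, hg, hg'⟩, rfl⟩ hcyl.isUnitK
  · -- intertwine
    intro b hb
    rw [gaugePsi, mul_assoc, hcyl.intertwine b hb, ← mul_assoc]
    simp only [← mul_assoc]
    rw [mul_assoc (g * ψ b) gInv g, hg', mul_one]
  · -- coproduct
    rw [map_mul, hcyl.coproduct, gaugeJinv, gaugeRpsi]
    have e1 : (gInv ⊗ₜ[k] gInv : A ⊗[k] A) * ((1 : A) ⊗ₜ[k] (g * K)) =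
        gInv ⊗ₜ[k] K := by
      simp [Algebra.TensorProduct.tmul_mul_tmul, ← mul_assoc, hg']
    have e2 : (gInv ⊗ₜ[k] K : A ⊗[k] A) * (g ⊗ₜ[k] (1 : A)) = (1 : A) ⊗ₜ[k] K := by
      simp [Algebra.TensorProduct.tmul_mul_tmul, hg']
    have e3 : (gInv ⊗ₜ[k] (1 : A) : A ⊗[k] A) * ((g * K) ⊗ₜ[k] (1 : A)) =
        K ⊗ₜ[k] (1 : A) := by
      simp [Algebra.TensorProduct.tmul_mul_tmul, ← mul_assoc, hg']
    simp only [mul_assoc]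
    rw [assoc_pair e1, assoc_pair e2, e3]
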